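/- Let α, β be irrational numbers in (0,1). The Beatty sequences B_α and B_β are disjoint if and only if there exist positive integers r and s with rα + sβ = 1. -/

import Mathlib

open scoped Classical

def beatty (α : ℝ) : Set ℤ := {m | ∃ n : ℕ, 0 < n ∧ m = ⌊(n : ℝ) / α⌋}

noncomputable def countLe (S : Set ℤ) (m : ℤ) : ℕ :=
  ((Finset.Icc 1 m).filter (fun k => k ∈ S)).card

namespace BeattyAux


/-- The subgroup of `ℝ × ℝ` generated by `(α,β)`, `(1,0)`, `(0,1)`. -/
def latt (α β : ℝ) : AddSubgroup (ℝ × ℝ) where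
  carrier := {x | ∃ N a b : ℤ, x = ((N : ℝ) * α + a, (N : ℝ) * β + b)}
  zero_mem' := ⟨0, 0, 0, by norm_num; rfl⟩
  add_mem' := by
    rintro x y ⟨N, a, b, rfl⟩ ⟨M, c, d, rfl⟩
    exact ⟨N + M, a + c, b + d, by
      simp only [Prod.mk_add_mk, Prod.ext_iff]
      push_cast
      constructor <;> ring⟩
  neg_mem' := by
    rintro x ⟨N, a, b, rfl⟩
    exact ⟨-N, -a, -b, by
      simp only [Prod.neg_mk, Prod.ext_iff]
      push_cast
      constructor <;> ring⟩

lemma dense_one_dim {θ : ℝ} (hirr : Irrational θ) (x ε : ℝ) (hε : 0 < ε) :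
    ∃ N a : ℤ, |(N : ℝ) * θ + a - x| < ε := by
  set S : AddSubgroup ℝ :=
    { carrier := {y | ∃ N a : ℤ, y = (N : ℝ) * θ + a}
      zero_mem' := ⟨0, 0, by norm_num⟩
      add_mem' := by
        rintro u v ⟨N, a, rfl⟩ ⟨M, c, rfl⟩
        exact ⟨N + M, a + c, by push_cast; ring⟩
      neg_mem' := by
        rintro u ⟨N, a, rfl⟩
        exact ⟨-N, -a, by push_cast; ring⟩ } with hS
  have hθ : θ ∈ S := ⟨1, 0, by norm_num⟩
  have h1 : (1 : ℝ) ∈ S := ⟨0, 1, by norm_num⟩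
  rcases AddSubgroup.dense_or_cyclic S with hd | ⟨g, hg⟩
  · have := Metric.dense_iff.mp hd x ε hε
    obtain ⟨y, hy1, hy2⟩ := this
    obtain ⟨N, a, rfl⟩ := hy2
    refine ⟨N, a, ?_⟩
    have := Metric.mem_ball.mp hy1
    rwa [Real.dist_eq] at this
  · exfalso
    rw [hg, AddSubgroup.mem_closure_singleton] at hθ h1
    obtain ⟨n, hn⟩ := hθ
    obtain ⟨m, hm⟩ := h1
    have hm0 : (m : ℝ) ≠ 0 := by
      intro h
      rw [zsmul_eq_mul] at hm
      rw [h] at hm; simp at hm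
    refine hirr ⟨(n : ℚ) / (m : ℚ), ?_⟩
    rw [zsmul_eq_mul] at hn hm
    have hg0 : g = 1 / (m : ℝ) := by field_simp at hm ⊢; linarith
    rw [hg0] at hn
    push_cast
    rw [← hn]; ring

lemma exists_small {α β : ℝ} (hirr : Irrational α) (ε : ℝ) (hε : 0 < ε) :
    ∃ w : ℝ × ℝ, w ∈ latt α β ∧ w ≠ 0 ∧ ‖w‖ < ε := by
  obtain ⟨K, hK⟩ := exists_nat_one_div_lt hε
  have hK0 : (0 : ℝ) < (K : ℝ) + 1 := by positivity
  set δ : ℝ := ε / (8 * ((K : ℝ) + 2)) with hδ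
  have hδ0 : 0 < δ := by positivity
  clear_value δ
  have H : ∀ j : ℕ, ∃ N a : ℤ, |(N : ℝ) * α + a - ((3 * (j : ℝ) + 1) * δ)| < δ :=
    fun j => dense_one_dim hirr _ δ hδ0
  choose N A hNA using H
  set f : ℕ → ℝ := fun j => (N j : ℝ) * α + A j with hf
  set g : ℕ → ℝ := fun j => Int.fract ((N j : ℝ) * β) with hg
  have hg01 : ∀ j, 0 ≤ g j ∧ g j < 1 := fun j => ⟨Int.fract_nonneg _, Int.fract_lt_one _⟩
  have hfmem : ∀ j : ℕ, f j ∈ Set.Ioo ((3 * (j : ℝ)) * δ) ((3 * (j : ℝ) + 2) * δ) := by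
    intro j
    have h := abs_lt.mp (hNA j)
    have hfj : f j = (N j : ℝ) * α + A j := rfl
    rw [Set.mem_Ioo, hfj]
    constructor
    · linarith [h.1]
    · linarith [h.2]
  -- bucket function
  set T : ℕ → ℕ := fun j => (⌊g j * ((K : ℝ) + 1)⌋).toNat with hT
  have hTmem : ∀ j, T j ∈ Finset.range (K + 1) := by
    intro j
    have h1 : g j * ((K : ℝ) + 1) < (K : ℝ) + 1 := by
      have := (hg01 j).2
      nlinarith
    have h2 : (0 : ℝ) ≤ g j * ((K : ℝ) + 1) := by
      have := (hg01 j).1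
      positivity
    have : ⌊g j * ((K : ℝ) + 1)⌋ < (K : ℕ) + 1 := by
      rw [Int.floor_lt]; push_cast; linarith
    simp only [Finset.mem_range, hT]
    omega
  obtain ⟨i, hi, j, hj, hij, hTij⟩ :=
    Finset.exists_ne_map_eq_of_card_lt_of_maps_to
      (s := Finset.range (K + 2)) (t := Finset.range (K + 1))
      (by simp) (fun a _ => hTmem a)
  have hfloor : ⌊g i * ((K : ℝ) + 1)⌋ = ⌊g j * ((K : ℝ) + 1)⌋ := by
    have h1 : (0:ℝ) ≤ g i * ((K : ℝ) + 1) := by have := (hg01 i).1; positivity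
    have h2 : (0:ℝ) ≤ g j * ((K : ℝ) + 1) := by have := (hg01 j).1; positivity
    have e1 : (⌊g i * ((K : ℝ) + 1)⌋).toNat = (⌊g j * ((K : ℝ) + 1)⌋).toNat := hTij
    have p1 : 0 ≤ ⌊g i * ((K : ℝ) + 1)⌋ := Int.floor_nonneg.mpr h1
    have p2 : 0 ≤ ⌊g j * ((K : ℝ) + 1)⌋ := Int.floor_nonneg.mpr h2
    omega
  -- the two lattice points
  have hsmem : ∀ j : ℕ, ((f j, g j) : ℝ × ℝ) ∈ latt α β := by
    intro j
    refine ⟨N j, A j, -⌊(N j : ℝ) * β⌋, ?_⟩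
    have h1 : f j = (N j : ℝ) * α + A j := rfl
    have h2 : g j = (N j : ℝ) * β + ((-⌊(N j : ℝ) * β⌋ : ℤ) : ℝ) := by
      show Int.fract ((N j : ℝ) * β) = _
      rw [Int.fract]
      push_cast
      ring
    rw [Prod.ext_iff]
    exact ⟨h1, h2⟩
  clear_value f g T
  refine ⟨(f i - f j, g i - g j), ?_, ?_, ?_⟩
  · have := AddSubgroup.sub_mem _ (hsmem i) (hsmem j)
    simpa using this
  · -- nonzero: first coordinates differ
    have hfi := hfmem i
    have hfj := hfmem j
    have : f i ≠ f j := by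
      rcases Nat.lt_or_ge i j with h | h
      · have hij' : (3 * (i : ℝ) + 2) ≤ 3 * (j : ℝ) := by
          push_cast
          have : (i : ℝ) + 1 ≤ (j : ℝ) := by exact_mod_cast h
          linarith
        intro heq
        have h1 := hfi.2
        have h2 := hfj.1
        nlinarith
      · have h' : j < i := by omega
        have hij' : (3 * (j : ℝ) + 2) ≤ 3 * (i : ℝ) := by
          have : (j : ℝ) + 1 ≤ (i : ℝ) := by exact_mod_cast h'
          linarith
        intro heq
        have h1 := hfj.2
        have h2 := hfi.1
        nlinarith
    intro hcon
    rw [Prod.mk_eq_zero] at hcon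
    exact this (by linarith [hcon.1])
  · -- norm bound
    rw [Prod.norm_def]
    have hb1 : |f i - f j| < ε := by
      have hfi := hfmem i
      have hfj := hfmem j
      have hiK : (i : ℝ) ≤ (K : ℝ) + 1 := by
        have : i < K + 2 := Finset.mem_range.mp hi
        exact_mod_cast Nat.lt_succ_iff.mp this
      have hjK : (j : ℝ) ≤ (K : ℝ) + 1 := by
        have : j < K + 2 := Finset.mem_range.mp hj
        exact_mod_cast Nat.lt_succ_iff.mp this
      have hub : ∀ k : ℕ, (k : ℝ) ≤ (K : ℝ) + 1 → f k < ε / 2 := by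
        intro k hk
        have h1 := (hfmem k).2
        have h2 : (3 * (k : ℝ) + 2) * δ ≤ (3 * ((K : ℝ) + 1) + 2) * δ := by
          apply mul_le_mul_of_nonneg_right _ hδ0.le
          linarith
        have h3 : (3 * ((K : ℝ) + 1) + 2) * δ < ε / 2 := by
          rw [hδ, ← mul_div_assoc]
          rw [div_lt_div_iff₀ (by positivity) (by norm_num : (0:ℝ) < 2)]
          nlinarith [mul_pos hε (show (0:ℝ) < (K:ℝ) + 3 by positivity)]
        exact ((h1.trans_le h2).trans h3)
      have hlb : ∀ k : ℕ, 0 < f k := by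
        intro k
        have := (hfmem k).1
        have h0 : (0 : ℝ) ≤ 3 * (k : ℝ) * δ := by positivity
        linarith
      have h1 := hub i hiK
      have h2 := hub j hjK
      have h3 := hlb i
      have h4 := hlb j
      rw [abs_lt]
      constructor <;> linarith
    have hb2 : |g i - g j| < ε := by
      have hK1 : (0 : ℝ) < (K : ℝ) + 1 := hK0
      have d1 : (⌊g i * ((K : ℝ) + 1)⌋ : ℝ) ≤ g i * ((K : ℝ) + 1) := Int.floor_le _
      have d2 : g i * ((K : ℝ) + 1) < ⌊g i * ((K : ℝ) + 1)⌋ + 1 := Int.lt_floor_add_one _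
      have d3 : (⌊g j * ((K : ℝ) + 1)⌋ : ℝ) ≤ g j * ((K : ℝ) + 1) := Int.floor_le _
      have d4 : g j * ((K : ℝ) + 1) < ⌊g j * ((K : ℝ) + 1)⌋ + 1 := Int.lt_floor_add_one _
      rw [hfloor] at d1 d2
      have hA : g i - g j < 1 / ((K : ℝ) + 1) := by
        rw [lt_div_iff₀ hK1]; nlinarith
      have hB : g j - g i < 1 / ((K : ℝ) + 1) := by
        rw [lt_div_iff₀ hK1]; nlinarith
      exact (abs_sub_lt_iff.mpr ⟨hA, hB⟩).trans hK
    simp only [Real.norm_eq_abs]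
    exact max_lt hb1 hb2

lemma beatty_mem_iff {α : ℝ} (h0 : 0 < α) {m : ℤ} :
    m ∈ beatty α ↔ ∃ n : ℤ, 0 < n ∧ (m : ℝ) * α ≤ n ∧ (n : ℝ) < ((m : ℝ) + 1) * α := by
  constructor
  · rintro ⟨n, hn, rfl⟩
    refine ⟨n, by exact_mod_cast hn, ?_, ?_⟩
    · have h1 : (⌊(n : ℝ) / α⌋ : ℝ) ≤ (n : ℝ) / α := Int.floor_le _
      calc (⌊(n : ℝ) / α⌋ : ℝ) * α ≤ ((n : ℝ) / α) * α := by
            exact mul_le_mul_of_nonneg_right h1 h0.le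
        _ = n := by field_simp
    · have h2 : (n : ℝ) / α < ⌊(n : ℝ) / α⌋ + 1 := Int.lt_floor_add_one _
      have := mul_lt_mul_of_pos_right h2 h0
      rwa [div_mul_cancel₀] at this
      exact h0.ne'
  · rintro ⟨n, hn, h1, h2⟩
    refine ⟨n.toNat, by omega, ?_⟩
    have hcast : ((n.toNat : ℕ) : ℝ) = (n : ℝ) := by
      have h := Int.toNat_of_nonneg hn.le
      exact_mod_cast h
    rw [hcast]
    symm
    rw [Int.floor_eq_iff]
    constructor
    · rw [le_div_iff₀ h0]; exact_mod_cast h1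
    · rw [div_lt_iff₀ h0]; push_cast; linarith
    -- no nonneg condition needed: Int.floor_eq_iff general form
  
lemma beatty_mem_strict {α : ℝ} (hirr : Irrational α) (h0 : 0 < α) {m : ℤ}
    (hm : m ∈ beatty α) :
    ∃ n : ℤ, 0 < n ∧ (m : ℝ) * α < n ∧ (n : ℝ) < ((m : ℝ) + 1) * α := by
  obtain ⟨n, hn, h1, h2⟩ := (beatty_mem_iff h0).mp hm
  refine ⟨n, hn, lt_of_le_of_ne h1 ?_, h2⟩
  intro h
  rcases eq_or_ne m 0 with rfl | hm0
  · have h0' : (n : ℝ) = 0 := by push_cast at h; linarith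
    exact hn.ne' (by exact_mod_cast h0')
  · exact (hirr.intCast_mul hm0).ne_int n h


lemma exists_line {α β : ℝ} (hirr : Irrational α) :
    ∃ u : ℝ × ℝ, ‖u‖ = 1 ∧ ∀ t : ℝ, t • u ∈ (latt α β).topologicalClosure := by
  have hcl : IsClosed ((latt α β).topologicalClosure : Set (ℝ × ℝ)) :=
    AddSubgroup.isClosed_topologicalClosure _
  have H : ∀ k : ℕ, ∃ w : ℝ × ℝ, w ∈ latt α β ∧ w ≠ 0 ∧ ‖w‖ < 1 / ((k : ℝ) + 1) :=
    fun k => exists_small hirr _ (by positivity)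
  choose w hw hw0 hwn using H
  have hr0 : ∀ k, 0 < ‖w k‖ := fun k => norm_pos_iff.mpr (hw0 k)
  have humem : ∀ k : ℕ, ‖w k‖⁻¹ • w k ∈ Metric.sphere (0 : ℝ × ℝ) 1 := by
    intro k
    rw [mem_sphere_zero_iff_norm, norm_smul, norm_inv, norm_norm]
    exact inv_mul_cancel₀ (hr0 k).ne'
  obtain ⟨l, hl, φ, hφ, hconv⟩ :=
    (isCompact_sphere (0 : ℝ × ℝ) 1).tendsto_subseq humem
  refine ⟨l, mem_sphere_zero_iff_norm.mp hl, ?_⟩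
  intro t
  set c : ℕ → ℝ := fun k => (⌊t / ‖w (φ k)‖⌋ : ℝ) * ‖w (φ k)‖ with hc
  have hzc : ∀ k : ℕ, c k • (‖w (φ k)‖⁻¹ • w (φ k)) = (⌊t / ‖w (φ k)‖⌋ : ℤ) • w (φ k) := by
    intro k
    rw [smul_smul, ← Int.cast_smul_eq_zsmul ℝ]
    congr 1
    rw [hc]
    field_simp
    exact mul_div_cancel_left₀ _ (hr0 (φ k)).ne'
  have hzmem : ∀ k : ℕ, c k • (‖w (φ k)‖⁻¹ • w (φ k)) ∈ (latt α β).topologicalClosure := by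
    intro k
    rw [hzc]
    exact AddSubgroup.zsmul_mem _ (AddSubgroup.le_topologicalClosure _ (hw (φ k))) _
  have hctend : Filter.Tendsto c Filter.atTop (nhds t) := by
    have hle : ∀ k : ℕ, c k ≤ t := by
      intro k
      have h1 : (⌊t / ‖w (φ k)‖⌋ : ℝ) ≤ t / ‖w (φ k)‖ := Int.floor_le _
      have := mul_le_mul_of_nonneg_right h1 (hr0 (φ k)).le
      rwa [div_mul_cancel₀ _ (hr0 (φ k)).ne'] at this
    have hge : ∀ k : ℕ, t - 1 / ((k : ℝ) + 1) ≤ c k := by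
      intro k
      have h1 : t / ‖w (φ k)‖ < (⌊t / ‖w (φ k)‖⌋ : ℝ) + 1 := Int.lt_floor_add_one _
      have h2 := mul_lt_mul_of_pos_right h1 (hr0 (φ k))
      rw [div_mul_cancel₀ _ (hr0 (φ k)).ne'] at h2
      have h3 : ‖w (φ k)‖ < 1 / ((φ k : ℝ) + 1) := hwn (φ k)
      have h4 : 1 / ((φ k : ℝ) + 1) ≤ 1 / ((k : ℝ) + 1) := by
        apply div_le_div_of_nonneg_left (by norm_num) (by positivity)
        have : (k : ℝ) ≤ (φ k : ℝ) := by exact_mod_cast hφ.le_apply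
        linarith
      have : c k = (⌊t / ‖w (φ k)‖⌋ : ℝ) * ‖w (φ k)‖ := rfl
      nlinarith [add_mul ((⌊t / ‖w (φ k)‖⌋) : ℝ) 1 ‖w (φ k)‖]
    have htop : Filter.Tendsto (fun k : ℕ => t - 1 / ((k : ℝ) + 1)) Filter.atTop (nhds t) := by
      have := tendsto_one_div_add_atTop_nhds_zero_nat (𝕜 := ℝ)
      have h := Filter.Tendsto.sub (tendsto_const_nhds (x := t)) this
      simpa using h
    exact tendsto_of_tendsto_of_tendsto_of_le_of_le htop tendsto_const_nhds hge hle
  have hfinal : Filter.Tendsto (fun k => c k • (‖w (φ k)‖⁻¹ • w (φ k)))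
      Filter.atTop (nhds (t • l)) := hctend.smul hconv
  exact hcl.mem_of_tendsto hfinal (Filter.Eventually.of_forall hzmem)


lemma box_empty {α β : ℝ} (ha0 : 0 < α) (ha1 : α < 1) (hb0 : 0 < β) (hb1 : β < 1)
    (hdisj : Disjoint (beatty α) (beatty β)) :
    ∀ x : ℝ × ℝ, x ∈ (latt α β).topologicalClosure →
      ¬(x.1 ∈ Set.Ioo (-α) 0 ∧ x.2 ∈ Set.Ioo (-β) 0) := by
  rintro x hx ⟨hx1, hx2⟩
  have hxc : x ∈ closure ((latt α β) : Set (ℝ × ℝ)) := by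
    rw [← AddSubgroup.topologicalClosure_coe]; exact hx
  have hopen : IsOpen (Set.Ioo (-α) 0 ×ˢ Set.Ioo (-β) 0) := isOpen_Ioo.prod isOpen_Ioo
  obtain ⟨y, hybox, hylatt⟩ := _root_.mem_closure_iff.mp hxc _ hopen ⟨hx1, hx2⟩
  obtain ⟨N, a, b, rfl⟩ := hylatt
  obtain ⟨⟨hy11, hy12⟩, hy21, hy22⟩ := hybox
  simp only at hy11 hy12 hy21 hy22
  rcases lt_trichotomy N 0 with hN | hN | hN
  · -- N < 0 : common value m = -N-1
    have hmα : (-N - 1 : ℤ) ∈ beatty α := by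
      rw [beatty_mem_iff ha0]
      refine ⟨a, ?_, ?_, ?_⟩
      · have hN1 : (N:ℝ) ≤ -1 := by exact_mod_cast (by omega : N ≤ -1)
        have : (0:ℝ) < a := by
          nlinarith [mul_nonneg (by linarith : (0:ℝ) ≤ -(N:ℝ) - 1) ha0.le]
        exact_mod_cast this
      · push_cast; nlinarith
      · push_cast; nlinarith
    have hmβ : (-N - 1 : ℤ) ∈ beatty β := by
      rw [beatty_mem_iff hb0]
      refine ⟨b, ?_, ?_, ?_⟩
      · have hN1 : (N:ℝ) ≤ -1 := by exact_mod_cast (by omega : N ≤ -1)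
        have : (0:ℝ) < b := by
          nlinarith [mul_nonneg (by linarith : (0:ℝ) ≤ -(N:ℝ) - 1) hb0.le]
        exact_mod_cast this
      · push_cast; nlinarith
      · push_cast; nlinarith
    exact Set.disjoint_left.mp hdisj hmα hmβ
  · -- N = 0 : impossible
    subst hN
    simp only [Int.cast_zero, zero_mul, zero_add] at hy11 hy12
    have h1 : (a:ℝ) ≤ -1 := by
      have : a ≤ -1 := by
        have : (a:ℝ) < 0 := hy12
        have : a < 0 := by exact_mod_cast this
        omega
      exact_mod_cast this
    linarith
  · -- N > 0 : common value m = N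
    have hmα : N ∈ beatty α := by
      rw [beatty_mem_iff ha0]
      refine ⟨-a, ?_, ?_, ?_⟩
      · have : (0:ℝ) < (-a : ℤ) := by
          have hNα : (0:ℝ) < (N:ℝ) * α := by
            have : (1:ℝ) ≤ (N:ℝ) := by exact_mod_cast (by omega : (1:ℤ) ≤ N)
            nlinarith
          push_cast; nlinarith
        exact_mod_cast this
      · push_cast; nlinarith
      · push_cast; nlinarith
    have hmβ : N ∈ beatty β := by
      rw [beatty_mem_iff hb0]
      refine ⟨-b, ?_, ?_, ?_⟩
      · have : (0:ℝ) < (-b : ℤ) := by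
          have hNβ : (0:ℝ) < (N:ℝ) * β := by
            have : (1:ℝ) ≤ (N:ℝ) := by exact_mod_cast (by omega : (1:ℤ) ≤ N)
            nlinarith
          push_cast; nlinarith
        exact_mod_cast this
      · push_cast; nlinarith
      · push_cast; nlinarith
    exact Set.disjoint_left.mp hdisj hmα hmβ

lemma forward_relation {α β : ℝ} (hirra : Irrational α) (hirrb : Irrational β)
    (ha0 : 0 < α) (ha1 : α < 1) (hb0 : 0 < β) (hb1 : β < 1)
    (hbox : ∀ x : ℝ × ℝ, x ∈ (latt α β).topologicalClosure →
      ¬(x.1 ∈ Set.Ioo (-α) 0 ∧ x.2 ∈ Set.Ioo (-β) 0)) :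
    ∃ p q : ℤ, 0 < p ∧ 0 < q ∧ (p : ℝ) * α + (q : ℝ) * β = 1 := by
  set C := (latt α β).topologicalClosure with hCdef
  have hcl : IsClosed (C : Set (ℝ × ℝ)) := AddSubgroup.isClosed_topologicalClosure _
  have hsub : latt α β ≤ C := AddSubgroup.le_topologicalClosure _
  have hv : ((α, β) : ℝ × ℝ) ∈ C := hsub ⟨1, 0, 0, by norm_num⟩
  have he1 : (((1:ℝ), (0:ℝ)) : ℝ × ℝ) ∈ C := hsub ⟨0, 1, 0, by norm_num⟩
  have he2 : (((0:ℝ), (1:ℝ)) : ℝ × ℝ) ∈ C := hsub ⟨0, 0, 1, by norm_num⟩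
  obtain ⟨u, hu1, hline⟩ := exists_line (α := α) (β := β) hirra
  -- u.1 ≠ 0
  have hu1ne : u.1 ≠ 0 := by
    intro h0
    have hu2 : u.2 ≠ 0 := by
      intro h2
      rw [Prod.norm_def, Real.norm_eq_abs, Real.norm_eq_abs, h0, h2] at hu1
      simp at hu1
    obtain ⟨N, a, hNa⟩ := dense_one_dim hirra (-α/2) (α/2) (by positivity)
    have hx0mem : (N:ℝ) * α + a ∈ Set.Ioo (-α) 0 := by
      rw [Set.mem_Ioo]
      have h := abs_lt.mp hNa
      constructor
      · linarith [h.1]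
      · linarith [h.2]
    have hs : (((N:ℝ) * α + a, (N:ℝ) * β + (0:ℤ)) : ℝ × ℝ) ∈ C := hsub ⟨N, a, 0, rfl⟩
    set tt := (-β/2 - ((N:ℝ) * β + ((0:ℤ):ℝ))) / u.2 with htt
    have hp : (((N:ℝ) * α + a, (N:ℝ) * β + ((0:ℤ):ℝ)) : ℝ × ℝ) + tt • u ∈ C :=
      AddSubgroup.add_mem _ hs (hline tt)
    refine hbox _ hp ⟨?_, ?_⟩
    · show (N:ℝ) * α + a + tt * u.1 ∈ Set.Ioo (-α) 0
      rw [h0, mul_zero, add_zero]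
      exact hx0mem
    · show (N:ℝ) * β + ((0:ℤ):ℝ) + tt * u.2 ∈ Set.Ioo (-β) 0
      have : (N:ℝ) * β + ((0:ℤ):ℝ) + tt * u.2 = -β/2 := by
        rw [htt, div_mul_cancel₀ _ hu2]; ring
      rw [this]
      constructor <;> [linarith; linarith]
  have hu2ne : u.2 ≠ 0 := by
    intro h0
    obtain ⟨N, b, hNb⟩ := dense_one_dim hirrb (-β/2) (β/2) (by positivity)
    have hy0mem : (N:ℝ) * β + b ∈ Set.Ioo (-β) 0 := by
      rw [Set.mem_Ioo]
      have h := abs_lt.mp hNb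
      constructor
      · linarith [h.1]
      · linarith [h.2]
    have hs : (((N:ℝ) * α + ((0:ℤ):ℝ), (N:ℝ) * β + b) : ℝ × ℝ) ∈ C := hsub ⟨N, 0, b, rfl⟩
    set tt := (-α/2 - ((N:ℝ) * α + ((0:ℤ):ℝ))) / u.1 with htt
    have hp : (((N:ℝ) * α + ((0:ℤ):ℝ), (N:ℝ) * β + b) : ℝ × ℝ) + tt • u ∈ C :=
      AddSubgroup.add_mem _ hs (hline tt)
    refine hbox _ hp ⟨?_, ?_⟩
    · show (N:ℝ) * α + ((0:ℤ):ℝ) + tt * u.1 ∈ Set.Ioo (-α) 0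
      have : (N:ℝ) * α + ((0:ℤ):ℝ) + tt * u.1 = -α/2 := by
        rw [htt, div_mul_cancel₀ _ hu1ne]; ring
      rw [this]
      constructor <;> [linarith; linarith]
    · show (N:ℝ) * β + b + tt * u.2 ∈ Set.Ioo (-β) 0
      rw [h0, mul_zero, add_zero]
      exact hy0mem
  -- never both coordinates positive, for any line contained in C
  have hnotpos : ∀ v : ℝ × ℝ, (∀ t : ℝ, t • v ∈ C) → ¬(0 < v.1 ∧ 0 < v.2) := by
    rintro v hlv ⟨h1, h2⟩
    set m := min (α / (2 * v.1)) (β / (2 * v.2)) with hm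
    have hm0 : 0 < m := lt_min (by positivity) (by positivity)
    refine hbox _ (hlv (-m)) ⟨?_, ?_⟩
    · show -m * v.1 ∈ Set.Ioo (-α) 0
      have e1 : m * v.1 ≤ (α / (2 * v.1)) * v.1 :=
        mul_le_mul_of_nonneg_right (min_le_left _ _) h1.le
      have e2 : (α / (2 * v.1)) * v.1 = α / 2 := by field_simp
      constructor
      · nlinarith
      · nlinarith
    · show -m * v.2 ∈ Set.Ioo (-β) 0
      have e1 : m * v.2 ≤ (β / (2 * v.2)) * v.2 :=
        mul_le_mul_of_nonneg_right (min_le_right _ _) h2.le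
      have e2 : (β / (2 * v.2)) * v.2 = β / 2 := by field_simp
      constructor
      · nlinarith
      · nlinarith
  have hlineneg : ∀ t : ℝ, t • (-u) ∈ C := by
    intro t
    rw [smul_neg, ← neg_smul]
    exact hline (-t)
  -- get the direction with positive first and negative second coordinate
  obtain ⟨u', hline', hup, hdn⟩ :
      ∃ u' : ℝ × ℝ, (∀ t : ℝ, t • u' ∈ C) ∧ 0 < u'.1 ∧ u'.2 < 0 := by
    rcases lt_or_gt_of_ne hu1ne with h1 | h1 <;> rcases lt_or_gt_of_ne hu2ne with h2 | h2
    · refine absurd ⟨?_, ?_⟩ (hnotpos (-u) hlineneg)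
      · simp only [Prod.fst_neg]; exact neg_pos.mpr h1
      · simp only [Prod.snd_neg]; exact neg_pos.mpr h2
    · refine ⟨-u, hlineneg, ?_, ?_⟩
      · simp only [Prod.fst_neg]; exact neg_pos.mpr h1
      · simp only [Prod.snd_neg]; exact neg_lt_zero.mpr h2
    · exact ⟨u, hline, h1, h2⟩
    · exact absurd ⟨h1, h2⟩ (hnotpos u hline)

  set μ : ℝ := -u'.2 / u'.1 with hμdef
  have hμpos : 0 < μ := div_pos (neg_pos.mpr hdn) hup
  -- kernel of the linear form lies in C
  have hker : ∀ w : ℝ × ℝ, μ * w.1 + w.2 = 0 → w ∈ C := by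
    intro w hw
    have hweq : w = (w.1 / u'.1) • u' := by
      rw [Prod.ext_iff]
      constructor
      · show w.1 = w.1 / u'.1 * u'.1
        field_simp
      · show w.2 = w.1 / u'.1 * u'.2
        have hμw : w.2 = -μ * w.1 := by linarith
        rw [hμw, hμdef]
        field_simp
    rw [hweq]
    exact hline' _
  set Φ : ℝ × ℝ →+ ℝ :=
    { toFun := fun w => μ * w.1 + w.2
      map_zero' := by simp
      map_add' := by
        intro x y
        simp only [Prod.fst_add, Prod.snd_add]
        ring } with hΦ
  have hΦapp : ∀ w : ℝ × ℝ, Φ w = μ * w.1 + w.2 := fun w => rfl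
  set G := AddSubgroup.map Φ C with hG
  have h1G : (1 : ℝ) ∈ G := ⟨((0:ℝ),(1:ℝ)), he2, by rw [hΦapp]; simp⟩
  have hμG : μ ∈ G := ⟨((1:ℝ),(0:ℝ)), he1, by rw [hΦapp]; simp⟩
  have hvG : μ * α + β ∈ G := ⟨((α, β) : ℝ × ℝ), hv, by rw [hΦapp]⟩
  have hCpre : ∀ w : ℝ × ℝ, Φ w ∈ G → w ∈ C := by
    rintro w ⟨cc, hcc, hphi⟩
    have hk0 : Φ (w - cc) = 0 := by rw [map_sub, hphi, sub_self]
    rw [hΦapp] at hk0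
    have hwc : w - cc ∈ C := hker _ hk0
    have := AddSubgroup.add_mem _ hcc hwc
    simpa using this
  clear hΦ hG hμdef
  clear_value μ Φ G
  rcases AddSubgroup.dense_or_cyclic G with hd | ⟨g, hgcyc⟩
  · exfalso
    have hpC : ((-α/2, -β/2) : ℝ × ℝ) ∈ closure (C : Set (ℝ × ℝ)) := by
      rw [Metric.mem_closure_iff]
      intro ε hε
      obtain ⟨gg, hgg1, hgg2⟩ := Metric.dense_iff.mp hd (μ * (-α/2) + (-β/2)) ε hε
      refine ⟨(-α/2, gg - μ * (-α/2)), hCpre _ ?_, ?_⟩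
      · have he : Φ (((-α/2 : ℝ), gg - μ * (-α/2)) : ℝ × ℝ) = gg := by
          rw [hΦapp]; ring
        rw [he]; exact hgg2
      · rw [Prod.dist_eq]
        apply max_lt
        · simpa using hε
        · rw [Real.dist_eq]
          have hd2 := Metric.mem_ball.mp hgg1
          rw [Real.dist_eq] at hd2
          have e : (-β/2 : ℝ) - (gg - μ * (-α/2)) = -(gg - (μ * (-α/2) + (-β/2))) := by ring
          rw [e, abs_neg]
          exact hd2
    rw [hcl.closure_eq] at hpC
    exact hbox _ hpC ⟨⟨by linarith, by linarith⟩, ⟨by linarith, by linarith⟩⟩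
  · rw [hgcyc, AddSubgroup.mem_closure_singleton] at h1G hμG hvG
    obtain ⟨n₀, hn₀⟩ := h1G
    obtain ⟨n₁, hn₁⟩ := hμG
    obtain ⟨n₂, hn₂⟩ := hvG
    rw [zsmul_eq_mul] at hn₀ hn₁ hn₂
    have hn₀0 : (n₀ : ℝ) ≠ 0 := by
      intro h
      rw [h, zero_mul] at hn₀
      exact one_ne_zero hn₀.symm
    have hn₀z : n₀ ≠ 0 := by exact_mod_cast hn₀0
    have hgval : g = 1 / (n₀ : ℝ) := by
      field_simp
      linarith [hn₀]
    have h1 : (n₁ : ℝ) = μ * (n₀ : ℝ) := by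
      rw [← hn₁, hgval]
      field_simp
    have h2 : (n₂ : ℝ) = (μ * α + β) * (n₀ : ℝ) := by
      rw [← hn₂, hgval]
      field_simp
    have hrel : (n₁ : ℝ) * α + (n₀ : ℝ) * β = (n₂ : ℝ) := by
      rw [h1, h2]; ring
    have hn₁n₀ : (0:ℝ) < (n₁ : ℝ) * (n₀ : ℝ) := by
      have e : (n₁ : ℝ) * n₀ = μ * (n₀:ℝ)^2 := by rw [h1]; ring
      rw [e]
      exact mul_pos hμpos (pow_two_pos_of_ne_zero hn₀0)
    have hn₂n₀ : (0:ℝ) < (n₂ : ℝ) * (n₀ : ℝ) := by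
      have e : (n₂ : ℝ) * n₀ = (μ * α + β) * (n₀:ℝ)^2 := by rw [h2]; ring
      rw [e]
      exact mul_pos (by nlinarith) (pow_two_pos_of_ne_zero hn₀0)
    obtain ⟨P, Q, K, j, hQpos, hPpos, hKpos, hrelPQ, hμQP, hjg⟩ :
        ∃ P Q K j : ℤ, 0 < Q ∧ 0 < P ∧ 0 < K ∧ ((P:ℝ) * α + (Q:ℝ) * β = (K:ℝ)) ∧
          (μ * (Q:ℝ) = (P:ℝ)) ∧ ((j:ℝ) * g = -(1/(Q:ℝ))) := by
      rcases lt_or_gt_of_ne hn₀z with h | h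
      · refine ⟨-n₁, -n₀, -n₂, 1, by omega, ?_, ?_, ?_, ?_, ?_⟩
        · have : (n₁ : ℝ) < 0 := by nlinarith [(show (n₀:ℝ) < 0 by exact_mod_cast h)]
          have : n₁ < 0 := by exact_mod_cast this
          omega
        · have : (n₂ : ℝ) < 0 := by nlinarith [(show (n₀:ℝ) < 0 by exact_mod_cast h)]
          have : n₂ < 0 := by exact_mod_cast this
          omega
        · push_cast
          linarith [hrel]
        · push_cast
          linarith [h1]
        · rw [hgval]
          push_cast
          field_simp
      · refine ⟨n₁, n₀, n₂, -1, h, ?_, ?_, ?_, ?_, ?_⟩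
        · have hpos : (0:ℝ) < (n₀ : ℝ) := by exact_mod_cast h
          have : (0:ℝ) < (n₁ : ℝ) := by nlinarith
          exact_mod_cast this
        · have hpos : (0:ℝ) < (n₀ : ℝ) := by exact_mod_cast h
          have : (0:ℝ) < (n₂ : ℝ) := by nlinarith
          exact_mod_cast this
        · exact hrel
        · linarith [h1]
        · rw [hgval]
          push_cast
          field_simp
    have hQne : (Q:ℝ) ≠ 0 := by
      have : (0:ℝ) < (Q:ℝ) := by exact_mod_cast hQpos
      exact this.ne'
    have hK1 : K = 1 := by
      by_contra hne
      have hK2 : (2:ℝ) ≤ (K:ℝ) := by exact_mod_cast (by omega : (2:ℤ) ≤ K)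
      have hKne : (K:ℝ) ≠ 0 := by linarith
      have hμαβ : μ * α + β = (K:ℝ) / (Q:ℝ) := by
        rw [eq_div_iff hQne]
        linear_combination α * hμQP + hrelPQ
      have hΦp0 : Φ ((-(α/(K:ℝ)), -(β/(K:ℝ))) : ℝ × ℝ) = -(1/(Q:ℝ)) := by
        rw [hΦapp]
        show μ * (-(α/(K:ℝ))) + (-(β/(K:ℝ))) = -(1/(Q:ℝ))
        have e : μ * (-(α/(K:ℝ))) + (-(β/(K:ℝ))) = -((μ * α + β)/(K:ℝ)) := by ring
        rw [e, hμαβ]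
        field_simp
      have hp0G : Φ ((-(α/(K:ℝ)), -(β/(K:ℝ))) : ℝ × ℝ) ∈ G := by
        rw [hΦp0, ← hjg, hgcyc]
        exact AddSubgroup.mem_closure_singleton.mpr ⟨j, by rw [zsmul_eq_mul]⟩
      have hp0C := hCpre _ hp0G
      have hαK : 0 < α/(K:ℝ) := div_pos ha0 (by linarith)
      have hβK : 0 < β/(K:ℝ) := div_pos hb0 (by linarith)
      have hαK2 : α/(K:ℝ) < α := div_lt_self ha0 (by linarith)
      have hβK2 : β/(K:ℝ) < β := div_lt_self hb0 (by linarith)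
      refine hbox _ hp0C ⟨⟨?_, ?_⟩, ?_, ?_⟩
      · show -α < -(α/(K:ℝ)); linarith
      · show -(α/(K:ℝ)) < 0; linarith
      · show -β < -(β/(K:ℝ)); linarith
      · show -(β/(K:ℝ)) < 0; linarith
    refine ⟨P, Q, hPpos, hQpos, ?_⟩
    rw [hK1] at hrelPQ
    exact_mod_cast hrelPQ


end BeattyAux

theorem beatty_disjoint_iff (α β : ℝ)
    (hirra : Irrational α) (hirrb : Irrational β)
    (ha0 : 0 < α) (ha1 : α < 1) (hb0 : 0 < β) (hb1 : β < 1) :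
    Disjoint (beatty α) (beatty β) ↔
      ∃ r s : ℕ, 0 < r ∧ 0 < s ∧ (r : ℝ) * α + (s : ℝ) * β = 1 := by
  constructor
  · intro hdisj
    obtain ⟨p, q, hp, hq, hrel⟩ :=
      BeattyAux.forward_relation hirra hirrb ha0 ha1 hb0 hb1
        (BeattyAux.box_empty ha0 ha1 hb0 hb1 hdisj)
    refine ⟨p.toNat, q.toNat, by omega, by omega, ?_⟩
    have hp' : ((p.toNat : ℕ) : ℝ) = (p : ℝ) := by
      have := Int.toNat_of_nonneg hp.le
      exact_mod_cast this
    have hq' : ((q.toNat : ℕ) : ℝ) = (q : ℝ) := by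
      have := Int.toNat_of_nonneg hq.le
      exact_mod_cast this
    rw [hp', hq']
    exact hrel
  · rintro ⟨r, s, hr, hs, hrel⟩
    rw [Set.disjoint_left]
    rintro m hma hmb
    obtain ⟨n₁, hn₁, ha1', ha2'⟩ := BeattyAux.beatty_mem_strict hirra ha0 hma
    obtain ⟨n₂, hn₂, hb1', hb2'⟩ := BeattyAux.beatty_mem_strict hirrb hb0 hmb
    have hrpos : (0 : ℝ) < r := by exact_mod_cast hr
    have hspos : (0 : ℝ) < s := by exact_mod_cast hs
    have key1 : (m : ℝ) < (r : ℝ) * n₁ + (s : ℝ) * n₂ := by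
      have e1 := mul_lt_mul_of_pos_left ha1' hrpos
      have e2 := mul_lt_mul_of_pos_left hb1' hspos
      have hsum : (r : ℝ) * ((m : ℝ) * α) + (s : ℝ) * ((m : ℝ) * β) = m := by
        have : (r : ℝ) * ((m : ℝ) * α) + (s : ℝ) * ((m : ℝ) * β)
            = (m : ℝ) * ((r : ℝ) * α + (s : ℝ) * β) := by ring
        rw [this, hrel, mul_one]
      linarith
    have key2 : (r : ℝ) * n₁ + (s : ℝ) * n₂ < (m : ℝ) + 1 := by
      have e1 := mul_lt_mul_of_pos_left ha2' hrpos
      have e2 := mul_lt_mul_of_pos_left hb2' hspos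
      have hsum : (r : ℝ) * (((m : ℝ) + 1) * α) + (s : ℝ) * (((m : ℝ) + 1) * β) = (m : ℝ) + 1 := by
        have : (r : ℝ) * (((m : ℝ) + 1) * α) + (s : ℝ) * (((m : ℝ) + 1) * β)
            = ((m : ℝ) + 1) * ((r : ℝ) * α + (s : ℝ) * β) := by ring
        rw [this, hrel, mul_one]
      linarith
    have k1 : m < (r : ℤ) * n₁ + (s : ℤ) * n₂ := by exact_mod_cast key1
    have k2 : (r : ℤ) * n₁ + (s : ℤ) * n₂ < m + 1 := by exact_mod_cast key2
    omega
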